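/- (Popescu–von Neumann inequality, homogeneous case, Hilbert-space formulation) Let T₁, …, T_k be operators on a Hilbert space H with ‖Σᵢ Tᵢ Tᵢ*‖ ≤ 1, and let p = Σ_{|w|=n} a_w e_w be a homogeneous non-commutative polynomial of degree n in k variables. Assume the operator inequality ‖p(T₁,…,T_k)‖ ≤ ‖p‖_{A(k)} (Popescu's inequality) where ‖p‖_{A(k)} is the left-regular norm on the full Fock space. Then ‖p(T₁,…,T_k)‖ ≤ (Σ_{|w|=n} |a_w|²)^{1/2}. -/

import Mathlib

open ContinuousLinearMap

/-- The ℓ² norm of a finitely supported function on the free monoid. -/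
noncomputable def l2norm {k : ℕ} (p : MonoidAlgebra ℂ (FreeMonoid (Fin k))) : ℝ :=
  Real.sqrt (∑ x ∈ p.coeff.support, ‖p.coeff x‖ ^ 2)

/-- Evaluation of a non-commutative polynomial `p = Σ_w a_w e_w` at the tuple `T`:
`p(T) = Σ_w a_w T_{i₁} ⋯ T_{i_n}` for `w = i₁ ⋯ i_n`. -/
noncomputable def evalAt {k : ℕ} {H : Type*} [NormedAddCommGroup H]
    [InnerProductSpace ℂ H] [CompleteSpace H]
    (p : MonoidAlgebra ℂ (FreeMonoid (Fin k))) (T : Fin k → H →L[ℂ] H) :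
    H →L[ℂ] H :=
  ∑ x ∈ p.coeff.support, p.coeff x • (x.toList.map T).prod

-- key pointwise lemma
lemma conv_apply_homog {k n : ℕ} (p q : MonoidAlgebra ℂ (FreeMonoid (Fin k)))
    (hp : ∀ x ∈ p.coeff.support, x.length = n) (u v : FreeMonoid (Fin k)) (hu : u.length = n) :
    (p * q).coeff (u * v) = p.coeff u * q.coeff v := by
  classical
  rw [MonoidAlgebra.coeff_mul, Finsupp.sum]
  rw [Finset.sum_eq_single u]
  · by_cases hv : v ∈ q.coeff.support
    · rw [Finsupp.sum, Finset.sum_eq_single v]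
      · simp
      · intro v' hv' hne
        rw [if_neg]
        intro h
        exact hne (mul_left_cancel h)
      · intro h; exact absurd hv h
    · have hqv : q.coeff v = 0 := Finsupp.notMem_support_iff.mp hv
      rw [hqv, mul_zero, Finsupp.sum, Finset.sum_eq_zero]
      intro v' hv'
      rw [if_neg]
      intro h
      exact hv (mul_left_cancel h ▸ hv')
  · intro u' hu' hne
    rw [Finsupp.sum, Finset.sum_eq_zero]
    intro v' hv'
    rw [if_neg]
    intro h
    apply hne
    have hl : (FreeMonoid.toList u').length = (FreeMonoid.toList u).length := by
      show u'.length = u.length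
      rw [hp u' hu', hu]
    have := congrArg FreeMonoid.toList h
    rw [FreeMonoid.toList_mul, FreeMonoid.toList_mul] at this
    exact FreeMonoid.toList.injective ((List.append_inj this hl).1)
  · intro hns
    have : p.coeff u = 0 := Finsupp.notMem_support_iff.mp hns
    simp [this, Finsupp.sum]

lemma l2norm_mul_le {k n : ℕ} (p q : MonoidAlgebra ℂ (FreeMonoid (Fin k)))
    (hp : ∀ x ∈ p.coeff.support, x.length = n) :
    l2norm (p * q) ≤ l2norm p * l2norm q := by
  classical
  unfold l2norm
  rw [← Real.sqrt_mul (by positivity)]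
  apply Real.sqrt_le_sqrt
  have hinj : Set.InjOn (fun z : FreeMonoid (Fin k) × FreeMonoid (Fin k) => z.1 * z.2)
      (p.coeff.support ×ˢ q.coeff.support : Finset _) := by
    rintro ⟨u, v⟩ huv ⟨u', v'⟩ huv' h
    simp only [Finset.coe_product, Set.mem_prod, Finset.mem_coe, Finsupp.mem_support_iff] at huv huv'
    simp only at h
    have hl : (FreeMonoid.toList u).length = (FreeMonoid.toList u').length := by
      show u.length = u'.length
      rw [hp u (Finsupp.mem_support_iff.mpr huv.1), hp u' (Finsupp.mem_support_iff.mpr huv'.1)]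
    have := congrArg FreeMonoid.toList h
    rw [FreeMonoid.toList_mul, FreeMonoid.toList_mul] at this
    obtain ⟨h1, h2⟩ := List.append_inj this hl
    exact Prod.ext (FreeMonoid.toList.injective h1) (FreeMonoid.toList.injective h2)
  have hsub : (p * q).coeff.support ⊆ (p.coeff.support ×ˢ q.coeff.support).image
      (fun z : FreeMonoid (Fin k) × FreeMonoid (Fin k) => z.1 * z.2) := by
    intro x hx
    by_contra hcon
    apply Finsupp.mem_support_iff.mp hx
    rw [MonoidAlgebra.coeff_mul, Finsupp.sum, Finset.sum_eq_zero]
    intro u hu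
    rw [Finsupp.sum, Finset.sum_eq_zero]
    intro v hv
    rw [if_neg]
    intro h
    exact hcon (Finset.mem_image.mpr ⟨(u, v), Finset.mem_product.mpr ⟨hu, hv⟩, h⟩)
  calc ∑ x ∈ (p * q).coeff.support, ‖(p * q).coeff x‖ ^ 2
      ≤ ∑ x ∈ (p.coeff.support ×ˢ q.coeff.support).image
          (fun z : FreeMonoid (Fin k) × FreeMonoid (Fin k) => z.1 * z.2), ‖(p * q).coeff x‖ ^ 2 :=
        Finset.sum_le_sum_of_subset_of_nonneg hsub (fun _ _ _ => by positivity)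
    _ = ∑ z ∈ p.coeff.support ×ˢ q.coeff.support, ‖(p * q).coeff (z.1 * z.2)‖ ^ 2 :=
        Finset.sum_image (fun a ha b hb h => hinj ha hb h)
    _ = ∑ u ∈ p.coeff.support, ∑ v ∈ q.coeff.support, ‖p.coeff u‖ ^ 2 * ‖q.coeff v‖ ^ 2 := by
        rw [Finset.sum_product]
        refine Finset.sum_congr rfl fun u hu => Finset.sum_congr rfl fun v hv => ?_
        rw [conv_apply_homog p q hp u v (hp u hu), norm_mul, mul_pow]
    _ = (∑ x ∈ p.coeff.support, ‖p.coeff x‖ ^ 2) * ∑ x ∈ q.coeff.support, ‖q.coeff x‖ ^ 2 :=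
        (Finset.sum_mul_sum _ _ _ _).symm

/-- Popescu–von Neumann inequality, homogeneous case: if `‖Σᵢ Tᵢ Tᵢ*‖ ≤ 1`, `p` is a
homogeneous polynomial of degree `n`, and Popescu's inequality
`‖p(T)‖ ≤ ‖p‖_{A(k)}` holds (the right side being the left-regular norm of `p` on the
full Fock space), then `‖p(T)‖ ≤ ‖p‖₂ = (Σ_{|w|=n} |a_w|²)^{1/2}`. -/
theorem popescu_homogeneous {k n : ℕ} {H : Type*} [NormedAddCommGroup H]
    [InnerProductSpace ℂ H] [CompleteSpace H]
    (T : Fin k → H →L[ℂ] H)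
    (hT : ‖∑ i, T i * adjoint (T i)‖ ≤ 1)
    (p : MonoidAlgebra ℂ (FreeMonoid (Fin k)))
    (hp : ∀ x ∈ p.coeff.support, x.length = n)
    (hPop : ‖evalAt p T‖ ≤ sSup {r : ℝ | ∃ q : MonoidAlgebra ℂ (FreeMonoid (Fin k)),
      l2norm q ≤ 1 ∧ r = l2norm (p * q)}) :
    ‖evalAt p T‖ ≤ l2norm p := by
  refine hPop.trans (Real.sSup_le ?_ (Real.sqrt_nonneg _))
  rintro r ⟨q, hq, rfl⟩
  calc l2norm (p * q) ≤ l2norm p * l2norm q := l2norm_mul_le p q hp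
    _ ≤ l2norm p * 1 := by
        exact mul_le_mul_of_nonneg_left hq (Real.sqrt_nonneg _)
    _ = l2norm p := mul_one _
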